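/- Let A = K − L = U − V = X − Y be three proper G-weak regular splittings of a group monotone matrix A, and let H = X#YU#VK#L. Then (I − H)A# = X#YU# + X# + X#YU#VK# ≥ 0 entrywise. -/

import Mathlib

open Matrix

/-- `X` is the group inverse of `A`. -/
def IsGroupInv {n : ℕ} (A X : Matrix (Fin n) (Fin n) ℝ) : Prop :=
  A * X * A = A ∧ X * A * X = X ∧ A * X = X * A

/-- Spectral radius of a real matrix: sup of moduli of its complex eigenvalues. -/
noncomputable def specRad {n : ℕ} (A : Matrix (Fin n) (Fin n) ℝ) : ℝ :=
  sSup ((fun z : ℂ => ‖z‖) '' spectrum ℂ (A.map (algebraMap ℝ ℂ)))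

/-- `A = U - V` is a proper splitting: `R(U) = R(A)` and `N(U) = N(A)`. -/
def ProperSplitting {n : ℕ} (A U V : Matrix (Fin n) (Fin n) ℝ) : Prop :=
  A = U - V ∧ LinearMap.range U.mulVecLin = LinearMap.range A.mulVecLin ∧
    LinearMap.ker U.mulVecLin = LinearMap.ker A.mulVecLin

/-- Entrywise nonnegativity of a matrix. -/
def Nonneg {n : ℕ} (M : Matrix (Fin n) (Fin n) ℝ) : Prop :=
  ∀ i j, 0 ≤ M i j

lemma matrix_eq_of_mulVec_eq {n : ℕ} {M N : Matrix (Fin n) (Fin n) ℝ}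
    (h : ∀ x, M.mulVec x = N.mulVec x) : M = N := by
  ext i j
  have := congrFun (h (Pi.single j 1)) i
  simpa [Matrix.mulVec_single] using this

/-- For a proper splitting, the spectral projectors agree: `K * Ki = A * Ai`. -/
lemma proj_eq {n : ℕ} {A Ai K Ki : Matrix (Fin n) (Fin n) ℝ}
    (hA : IsGroupInv A Ai) (hK : IsGroupInv K Ki)
    (hr : LinearMap.range K.mulVecLin = LinearMap.range A.mulVecLin)
    (hk : LinearMap.ker K.mulVecLin = LinearMap.ker A.mulVecLin) :
    K * Ki = A * Ai := by
  obtain ⟨hA1, hA2, hA3⟩ := hA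
  obtain ⟨hK1, hK2, hK3⟩ := hK
  -- (A * Ai) * (K * Ki) x = (K * Ki) x
  have hQP : ∀ x, (A * Ai).mulVec ((K * Ki).mulVec x) = (K * Ki).mulVec x := by
    intro x
    have hmem : (K * Ki).mulVec x ∈ LinearMap.range A.mulVecLin := by
      rw [← hr]
      exact ⟨Ki.mulVec x, by simp [Matrix.mulVecLin_apply, Matrix.mulVec_mulVec]⟩
    obtain ⟨y, hy⟩ := hmem
    rw [Matrix.mulVecLin_apply] at hy
    rw [← hy, Matrix.mulVec_mulVec, Matrix.mul_assoc A Ai A, ← Matrix.mul_assoc, hA1]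
  have hKP : K * (K * Ki) = K := by
    rw [hK3, ← Matrix.mul_assoc, hK1]
  have hQker : ∀ x, (A * Ai).mulVec (x - (K * Ki).mulVec x) = 0 := by
    intro x
    have hKz : K.mulVec (x - (K * Ki).mulVec x) = 0 := by
      rw [Matrix.mulVec_sub, Matrix.mulVec_mulVec, hKP, sub_self]
    have hmem : (x - (K * Ki).mulVec x) ∈ LinearMap.ker A.mulVecLin := by
      rw [← hk]
      simpa [Matrix.mulVecLin_apply] using hKz
    rw [LinearMap.mem_ker, Matrix.mulVecLin_apply] at hmem
    rw [hA3, ← Matrix.mulVec_mulVec, hmem, Matrix.mulVec_zero]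
  apply matrix_eq_of_mulVec_eq
  intro x
  have h1 := hQP x
  have h2 := hQker x
  rw [Matrix.mulVec_sub] at h2
  have h3 : (A * Ai).mulVec x = (A * Ai).mulVec ((K * Ki).mulVec x) := sub_eq_zero.mp h2
  rw [← h1, ← h3]

/-- Key identity for a proper G-weak regular splitting: `Ki * L * Ai = Ai - Ki`. -/
lemma split_key {n : ℕ} {A Ai K L Ki : Matrix (Fin n) (Fin n) ℝ}
    (hA : IsGroupInv A Ai) (hs : ProperSplitting A K L) (hK : IsGroupInv K Ki) :
    Ki * L * Ai = Ai - Ki := by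
  obtain ⟨hsplit, hr, hk⟩ := hs
  have hp : K * Ki = A * Ai := proj_eq hA hK hr hk
  have hL : L = K - A := by rw [hsplit]; abel
  obtain ⟨hA1, hA2, hA3⟩ := hA
  obtain ⟨hK1, hK2, hK3⟩ := hK
  have h1 : Ki * K * Ai = Ai := by
    rw [← hK3, hp, hA3, hA2]
  have h2 : Ki * A * Ai = Ki := by
    rw [Matrix.mul_assoc, ← hp, ← Matrix.mul_assoc, hK2]
  calc Ki * L * Ai = Ki * K * Ai - Ki * A * Ai := by rw [hL]; noncomm_ring
  _ = Ai - Ki := by rw [h1, h2]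

lemma nonneg_mul {n : ℕ} {M N : Matrix (Fin n) (Fin n) ℝ}
    (hM : Nonneg M) (hN : Nonneg N) : Nonneg (M * N) := by
  intro i j
  rw [Matrix.mul_apply]
  exact Finset.sum_nonneg fun k _ => mul_nonneg (hM i k) (hN k j)

theorem three_step_identity {n : ℕ}
    (A K L U V X Y Ai Ki Ui Xi : Matrix (Fin n) (Fin n) ℝ)
    (hA : IsGroupInv A Ai) (hAi : Nonneg Ai)
    (hsK : ProperSplitting A K L) (hK : IsGroupInv K Ki)
    (hKi : Nonneg Ki) (hKL : Nonneg (Ki * L))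
    (hsU : ProperSplitting A U V) (hU : IsGroupInv U Ui)
    (hUi : Nonneg Ui) (hUV : Nonneg (Ui * V))
    (hsX : ProperSplitting A X Y) (hX : IsGroupInv X Xi)
    (hXi : Nonneg Xi) (hXY : Nonneg (Xi * Y)) :
    (1 - Xi * Y * Ui * V * Ki * L) * Ai
      = Xi * Y * Ui + Xi + Xi * Y * Ui * V * Ki ∧
    Nonneg ((1 - Xi * Y * Ui * V * Ki * L) * Ai) := by
  have hKey : Ki * L * Ai = Ai - Ki := split_key hA hsK hK
  have hUey : Ui * V * Ai = Ai - Ui := split_key hA hsU hU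
  have hXey : Xi * Y * Ai = Ai - Xi := split_key hA hsX hX
  have hmain : (1 - Xi * Y * Ui * V * Ki * L) * Ai
      = Xi * Y * Ui + Xi + Xi * Y * Ui * V * Ki := by
    have e1 : Xi * Y * Ui * V * Ki * L * Ai = Xi * Y * Ui * V * (Ai - Ki) := by
      rw [← hKey]; noncomm_ring
    have e2 : Xi * Y * Ui * V * Ai = Xi * Y * (Ai - Ui) := by
      rw [← hUey]; noncomm_ring
    have e3 : Xi * Y * Ai = Ai - Xi := hXey
    calc (1 - Xi * Y * Ui * V * Ki * L) * Ai
        = Ai - Xi * Y * Ui * V * Ki * L * Ai := by noncomm_ring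
      _ = Ai - Xi * Y * Ui * V * Ai + Xi * Y * Ui * V * Ki := by
          rw [e1]; noncomm_ring
      _ = Ai - Xi * Y * Ai + Xi * Y * Ui + Xi * Y * Ui * V * Ki := by
          rw [e2]; noncomm_ring
      _ = Xi * Y * Ui + Xi + Xi * Y * Ui * V * Ki := by
          rw [e3]; noncomm_ring
  refine ⟨hmain, ?_⟩
  rw [hmain]
  intro i j
  have t1 : Nonneg (Xi * Y * Ui) := nonneg_mul hXY hUi
  have t2 : Nonneg (Xi * Y * Ui * V * Ki) := by
    have : Xi * Y * Ui * V * Ki = (Xi * Y) * (Ui * V) * Ki := by noncomm_ring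
    rw [this]
    exact nonneg_mul (nonneg_mul hXY hUV) hKi
  have := add_nonneg (add_nonneg (t1 i j) (hXi i j)) (t2 i j)
  simpa using this
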